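/- Let θ : ℝ → ℝ^A be differentiable and satisfy the QPG dynamics θ̇_b(t) = π(b; θ(t)) · A(b; θ(t)) for all b ∈ A and all t. Then the induced policy trajectory satisfies the dynamical system d/dt π(a; θ(t)) = π(a; θ(t)) · (π(a; θ(t)) A(a; θ(t)) − ∑_{b∈A} π(b; θ(t))² A(b; θ(t))) for all a ∈ A and all t. -/

import Mathlib

/-- The softmax policy `π(a; θ) = exp θ_a / ∑_b exp θ_b`. -/
noncomputable def softmax {A : Type*} [Fintype A] (θ : A → ℝ) (a : A) : ℝ :=
  Real.exp (θ a) / ∑ b, Real.exp (θ b)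

lemma softmax_deriv {A : Type*} [Fintype A] [Nonempty A]
    (θ : ℝ → A → ℝ) (θdot : ℝ → A → ℝ)
    (hθ : ∀ t : ℝ, HasDerivAt θ (θdot t) t) (t : ℝ) (a : A) :
    HasDerivAt (fun s => softmax (θ s) a)
      (softmax (θ t) a * (θdot t a - ∑ b, softmax (θ t) b * θdot t b)) t := by
  have hcomp : ∀ b : A, HasDerivAt (fun s => θ s b) (θdot t b) t := by
    intro b
    exact (hasDerivAt_pi.mp (hθ t)) b
  have hnum : HasDerivAt (fun s => Real.exp (θ s a)) (Real.exp (θ t a) * θdot t a) t :=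
    (hcomp a).exp
  have hden : HasDerivAt (fun s => ∑ b, Real.exp (θ s b))
      (∑ b, Real.exp (θ t b) * θdot t b) t := by
    exact HasDerivAt.fun_sum (fun b _ => (hcomp b).exp)
  have hS : (0:ℝ) < ∑ b, Real.exp (θ t b) :=
    Finset.sum_pos (fun b _ => Real.exp_pos _) Finset.univ_nonempty
  have hq : HasDerivAt (fun s => Real.exp (θ s a) / ∑ b, Real.exp (θ s b)) _ t :=
    hnum.div hden hS.ne'
  convert hq using 1
  · rfl
  unfold softmax
  have : ∀ b : A, (Real.exp (θ t b) / ∑ c, Real.exp (θ t c)) * θdot t b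
      = Real.exp (θ t b) * θdot t b / ∑ c, Real.exp (θ t c) := fun b => by ring
  simp only [this, ← Finset.sum_div]
  field_simp

/-- if `θ : ℝ → ℝ^A` is differentiable and follows the QPG dynamics
`θ̇_b(t) = π(b; θ(t)) A(b; θ(t))` (with `A(b; θ) = q b − ∑_c π(c; θ) q c`), then the
induced policy trajectory satisfies
`d/dt π(a; θ(t)) = π(a; θ(t)) (π(a; θ(t)) A(a; θ(t)) − ∑_b π(b; θ(t))² A(b; θ(t)))`. -/
theorem stmt5 {A : Type*} [Fintype A] [Nonempty A]
    (q : A → ℝ) (θ : ℝ → A → ℝ) (θdot : ℝ → A → ℝ)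
    (hθ : ∀ t : ℝ, HasDerivAt θ (θdot t) t)
    (hdyn : ∀ (t : ℝ) (b : A),
      θdot t b = softmax (θ t) b * (q b - ∑ c, softmax (θ t) c * q c)) :
    ∀ (t : ℝ) (a : A),
      HasDerivAt (fun s => softmax (θ s) a)
        (softmax (θ t) a *
          (softmax (θ t) a * (q a - ∑ c, softmax (θ t) c * q c) -
            ∑ b, (softmax (θ t) b) ^ 2 * (q b - ∑ c, softmax (θ t) c * q c))) t := by
  intro t a
  have h := softmax_deriv θ θdot hθ t a
  have hsum : ∑ b, (softmax (θ t) b) ^ 2 * (q b - ∑ c, softmax (θ t) c * q c)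
      = ∑ b, softmax (θ t) b * θdot t b :=
    Finset.sum_congr rfl fun b _ => by rw [hdyn t b]; ring
  rw [hsum, ← hdyn t a]
  exact h
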